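/- A sequence (x_n) in a multi-metric space M̃ = ⋃_{i=1}^m Mᵢ converges to some point x ∈ M̃ if and only if there exist an index N and an integer k with 1 ≤ k ≤ m such that the tail {x_n : n ≥ N} lies in M_k and converges to x in the metric space (M_k, ρ_k). -/
import Mathlib


/-- `ρ` is a metric on the subset `S` of `M`. -/
def IsMetricOn {M : Type*} (S : Set M) (ρ : M → M → ℝ) : Prop :=
  (∀ x ∈ S, ∀ y ∈ S, 0 ≤ ρ x y) ∧
  (∀ x ∈ S, ∀ y ∈ S, (ρ x y = 0 ↔ x = y)) ∧
  (∀ x ∈ S, ∀ y ∈ S, ρ x y = ρ y x) ∧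
  (∀ x ∈ S, ∀ y ∈ S, ∀ z ∈ S, ρ x z ≤ ρ x y + ρ y z)

/-- A sequence in the multi-metric space `⋃ i, Ms i` converges to `x0`:
some tail lies in a single part `Ms k` containing `x0` and converges there
in the metric `ρ k`. -/
def MultiConvergesTo {M : Type*} {m : ℕ} (Ms : Fin m → Set M)
    (ρ : Fin m → M → M → ℝ) (x : ℕ → M) (x0 : M) : Prop :=
  ∃ N k, x0 ∈ Ms k ∧ (∀ n ≥ N, x n ∈ Ms k) ∧
    ∀ ε > 0, ∃ N', ∀ n ≥ N', ρ k (x n) x0 < ε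

/-- A Cauchy sequence in the multi-metric space `⋃ i, Ms i`. -/
def MultiCauchy {M : Type*} {m : ℕ} (Ms : Fin m → Set M)
    (ρ : Fin m → M → M → ℝ) (x : ℕ → M) : Prop :=
  ∀ ε > 0, ∃ N s, ∀ p ≥ N, ∀ q ≥ N,
    x p ∈ Ms s ∧ x q ∈ Ms s ∧ ρ s (x p) (x q) < ε

/-- The multi-metric space is completed: every Cauchy sequence converges. -/
def MultiCompleted {M : Type*} {m : ℕ} (Ms : Fin m → Set M)
    (ρ : Fin m → M → M → ℝ) : Prop :=
  ∀ x : ℕ → M, MultiCauchy Ms ρ x → ∃ x0, MultiConvergesTo Ms ρ x x0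

/-- Theorem 2.2: a sequence in a multi-metric space is convergent (to `x0`) if and
only if some tail lies in a single part `Ms k` and converges to `x0` there. -/
theorem multiConvergesTo_iff_tail {M : Type*} {m : ℕ} (Ms : Fin m → Set M)
    (ρ : Fin m → M → M → ℝ) (hρ : ∀ i, IsMetricOn (Ms i) (ρ i))
    (hcov : ∀ y : M, ∃ i, y ∈ Ms i) (x : ℕ → M) (x0 : M) :
    (∀ ε > 0, ∃ N i, x0 ∈ Ms i ∧ ∀ n ≥ N, x n ∈ Ms i ∧ ρ i (x n) x0 < ε) ↔
    MultiConvergesTo Ms ρ x x0 := by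
  constructor
  · intro h
    choose N j h1 h2 using fun n : ℕ => h (1 / (n + 1)) (by positivity)
    have : Nonempty (Fin m) := (hcov x0).elim fun i _ => ⟨i⟩
    obtain ⟨k, hk⟩ := Finite.exists_infinite_fiber j
    have hk' : (j ⁻¹' {k}).Infinite := Set.infinite_coe_iff.mp hk
    obtain ⟨n0, hn0mem, -⟩ := hk'.exists_gt 0
    have hjn0 : j n0 = k := hn0mem
    refine ⟨N n0, k, hjn0 ▸ h1 n0, fun n hn => hjn0 ▸ (h2 n0 n hn).1, ?_⟩
    intro ε hε
    obtain ⟨b, hb⟩ := exists_nat_gt (1 / ε)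
    obtain ⟨n1, hn1mem, hn1gt⟩ := hk'.exists_gt b
    have hjn1 : j n1 = k := hn1mem
    refine ⟨N n1, fun n hn => ?_⟩
    have := (h2 n1 n hn).2
    rw [hjn1] at this
    refine this.trans_le ?_
    rw [div_le_iff₀ (by positivity)]
    rw [div_lt_iff₀ hε] at hb
    nlinarith [hn1gt, (Nat.cast_lt (α := ℝ)).mpr hn1gt]
  · rintro ⟨N, k, hx0, htail, hconv⟩ ε hε
    obtain ⟨N', hN'⟩ := hconv ε hε
    exact ⟨max N N', k, hx0, fun n hn =>
      ⟨htail n (le_trans (le_max_left _ _) hn), hN' n (le_trans (le_max_right _ _) hn)⟩⟩
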